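/- Assume l ≥ 1 and the pair (m_1,…,m_n; l) is separating. Then the composite operator E_{12}∘E_{21} maps the space H_{l−1} of homogeneous polynomials of degree l−1 to itself and is a linear isomorphism of H_{l−1}. -/

import Mathlib

noncomputable section

variable {n : ℕ}

/-- ∂/∂x_s as a ℂ-linear endomorphism of ℂ[x_1,…,x_n]. -/
def Dop (n : ℕ) (s : Fin n) : Module.End ℂ (MvPolynomial (Fin n) ℂ) :=
  (MvPolynomial.pderiv s).toLinearMap

/-- Multiplication by x_s. -/
def Xop (n : ℕ) (s : Fin n) : Module.End ℂ (MvPolynomial (Fin n) ℂ) :=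
  LinearMap.mulLeft ℂ (MvPolynomial.X s)

def e11 (m : Fin n → ℂ) (s : Fin n) : Module.End ℂ (MvPolynomial (Fin n) ℂ) :=
  m s • (1 : Module.End ℂ (MvPolynomial (Fin n) ℂ)) - (2:ℂ) • (Xop n s * Dop n s)

def e12 (m : Fin n → ℂ) (s : Fin n) : Module.End ℂ (MvPolynomial (Fin n) ℂ) :=
  m s • Dop n s - Xop n s * Dop n s * Dop n s

def e21 (n : ℕ) (s : Fin n) : Module.End ℂ (MvPolynomial (Fin n) ℂ) := Xop n s

def E12 (m : Fin n → ℂ) : Module.End ℂ (MvPolynomial (Fin n) ℂ) := ∑ s, e12 m s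

def E21 (n : ℕ) : Module.End ℂ (MvPolynomial (Fin n) ℂ) := ∑ s, e21 n s

/-- The matrix of operators e_{ab}^{(s)}. -/
def eMat (m : Fin n → ℂ) (s : Fin n) : Matrix (Fin 2) (Fin 2) (Module.End ℂ (MvPolynomial (Fin n) ℂ)) :=
  !![e11 m s, e12 m s; e21 n s, 0]

def Omega (m : Fin n → ℂ) (s r : Fin n) : Module.End ℂ (MvPolynomial (Fin n) ℂ) :=
  ∑ a : Fin 2, ∑ b : Fin 2, eMat m s a b * eMat m r b a

/-- The Gaudin Hamiltonian Ĥ_s. -/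
def gaudin (m : Fin n → ℂ) (z : Fin n → ℂ) (s : Fin n) :
    Module.End ℂ (MvPolynomial (Fin n) ℂ) :=
  ∑ r ∈ Finset.univ.erase s,
    (z s - z r)⁻¹ • ((m s * m r) • (1 : Module.End ℂ (MvPolynomial (Fin n) ℂ)) - Omega m s r)

/-- The weight space H_l of homogeneous polynomials of degree l. -/
def homog (n l : ℕ) : Submodule ℂ (MvPolynomial (Fin n) ℂ) :=
  MvPolynomial.homogeneousSubmodule (Fin n) ℂ l

/-- The singular weight space S_l. -/
def singSpace (m : Fin n → ℂ) (l : ℕ) : Submodule ℂ (MvPolynomial (Fin n) ℂ) :=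
  homog n l ⊓ LinearMap.ker (E12 m)

/-- The pair (m; l) is separating. -/
def Separating (m : Fin n → ℂ) (l : ℕ) : Prop :=
  ∀ i : ℕ, 1 ≤ i → i ≤ l → (∑ s, m s) - 2 * l + 1 + i ≠ 0


open MvPolynomial

variable {n : ℕ}

-- X s * ∂_s (monomial d c) = (d s) • monomial d c
lemma Xd_monomial (s : Fin n) (d : Fin n →₀ ℕ) (c : ℂ) :
    X s * pderiv s (monomial d c) = ((d s : ℂ)) • monomial d c := by
  rw [pderiv_monomial]
  by_cases h : d s = 0
  · simp [h]
  · have hle : Finsupp.single s 1 ≤ d := Finsupp.single_le_iff.mpr (Nat.one_le_iff_ne_zero.mpr h)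
    rw [X, monomial_mul, one_mul, add_comm, tsub_add_cancel_of_le hle, smul_monomial,
      smul_eq_mul, mul_comm]

lemma degree_sub_single (s : Fin n) (d : Fin n →₀ ℕ) (h : d s ≠ 0) :
    (d - Finsupp.single s 1).degree + 1 = d.degree := by
  have hle : Finsupp.single s 1 ≤ d := Finsupp.single_le_iff.mpr (Nat.one_le_iff_ne_zero.mpr h)
  have hd : d = (d - Finsupp.single s 1) + Finsupp.single s 1 := (tsub_add_cancel_of_le hle).symm
  have h1 : (Finsupp.single s 1).degree = 1 := by
    exact Finsupp.degree_single s 1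
  calc (d - Finsupp.single s 1).degree + 1
      = (d - Finsupp.single s 1).degree + (Finsupp.single s 1).degree := by rw [h1]
    _ = d.degree := by
        conv_rhs => rw [hd]
        simp [Finsupp.degree_eq_weight_one, map_add]

lemma pderiv_isHomog {k : ℕ} (s : Fin n) {p : MvPolynomial (Fin n) ℂ}
    (hp : p.IsHomogeneous k) : (pderiv s p).IsHomogeneous (k - 1) := by
  conv_lhs => rw [p.as_sum]
  rw [map_sum]
  apply IsHomogeneous.sum
  intro d hd
  rw [pderiv_monomial]
  by_cases h : d s = 0
  · simp [h, isHomogeneous_zero]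
  · apply isHomogeneous_monomial
    have hdd : d.degree = k := by
      rw [Finsupp.degree_eq_weight_one]; exact hp (MvPolynomial.mem_support_iff.mp hd)
    have := degree_sub_single s d h
    omega

lemma pderiv_eq_zero_of_homog0 (s : Fin n) {p : MvPolynomial (Fin n) ℂ}
    (hp : p.IsHomogeneous 0) : pderiv s p = 0 := by
  conv_lhs => rw [p.as_sum]
  rw [map_sum]
  apply Finset.sum_eq_zero
  intro d hd
  have hdd : d.degree = 0 := by
    rw [Finsupp.degree_eq_weight_one]; exact hp (MvPolynomial.mem_support_iff.mp hd)
  have h : d s = 0 := by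
    have := Finsupp.le_degree s d; omega
  simp [pderiv_monomial, h]

/-- Euler's identity -/
lemma euler {k : ℕ} {p : MvPolynomial (Fin n) ℂ} (hp : p.IsHomogeneous k) :
    ∑ s, X s * pderiv s p = ((k : ℂ)) • p := by
  conv_lhs => rw [p.as_sum]
  conv_rhs => rw [p.as_sum]
  simp only [map_sum, Finset.mul_sum, Xd_monomial, Finset.smul_sum]
  rw [Finset.sum_comm]
  apply Finset.sum_congr rfl
  intro d hd
  rw [← Finset.sum_smul]
  congr 1
  have hdd : d.degree = k := by
    rw [Finsupp.degree_eq_weight_one]; exact hp (MvPolynomial.mem_support_iff.mp hd)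
  have : ∑ s : Fin n, d s = k := by
    rw [← hdd, Finsupp.degree]
    exact (Finset.sum_subset (Finset.subset_univ _) (by intro x _ hx; simpa using hx)).symm
  rw [← this]
  push_cast
  rfl

lemma E21_apply (p : MvPolynomial (Fin n) ℂ) : E21 n p = (∑ s, X s) * p := by
  simp [E21, e21, Xop, LinearMap.sum_apply, Finset.sum_mul]

lemma E12_apply (m : Fin n → ℂ) (p : MvPolynomial (Fin n) ℂ) :
    E12 m p = ∑ s, (m s • pderiv s p - X s * pderiv s (pderiv s p)) := by
  simp [E12, e12, Dop, Xop, LinearMap.sum_apply, Module.End.mul_apply]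

lemma comm12 (m : Fin n → ℂ) (p : MvPolynomial (Fin n) ℂ) :
    E12 m (E21 n p)
      = E21 n (E12 m p) + (∑ s, m s) • p - (2:ℂ) • ∑ s, X s * pderiv s p := by
  set S : MvPolynomial (Fin n) ℂ := ∑ t, X t with hS
  have hdS : ∀ s : Fin n, pderiv s S = 1 := by
    intro s
    rw [hS, map_sum]
    classical
    simp [pderiv_X, Finset.sum_pi_single']
  have h1 : ∀ s : Fin n, pderiv s (S * p) = p + S * pderiv s p := by
    intro s; rw [pderiv_mul, hdS, one_mul]
  have h2 : ∀ s : Fin n, pderiv s (p + S * pderiv s p)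
      = 2 * pderiv s p + S * pderiv s (pderiv s p) := by
    intro s
    rw [map_add, pderiv_mul, hdS, one_mul]
    ring
  rw [E21_apply, E12_apply, E12_apply, E21_apply]
  rw [← hS]
  simp only [h1, h2]
  rw [Finset.mul_sum, Finset.sum_smul, Finset.smul_sum, ← Finset.sum_add_distrib,
    ← Finset.sum_sub_distrib]
  apply Finset.sum_congr rfl
  intro s _
  simp only [smul_eq_C_mul, map_ofNat]
  ring


lemma homog_iff {k : ℕ} {p : MvPolynomial (Fin n) ℂ} :
    p ∈ homog n k ↔ p.IsHomogeneous k := MvPolynomial.mem_homogeneousSubmodule k p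

lemma E21_mem {k : ℕ} {p : MvPolynomial (Fin n) ℂ} (hp : p ∈ homog n k) :
    E21 n p ∈ homog n (k + 1) := by
  rw [E21_apply, homog_iff]
  have hX : (∑ s : Fin n, (X s : MvPolynomial (Fin n) ℂ)).IsHomogeneous 1 :=
    IsHomogeneous.sum _ _ _ fun s _ => isHomogeneous_X ℂ s
  have h2 : ((∑ s : Fin n, (X s : MvPolynomial (Fin n) ℂ)) * p).IsHomogeneous (1 + k) :=
    hX.mul (homog_iff.mp hp)
  rwa [Nat.add_comm] at h2

lemma E12_mem (m : Fin n → ℂ) {k : ℕ} {p : MvPolynomial (Fin n) ℂ}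
    (hp : p ∈ homog n (k + 1)) : E12 m p ∈ homog n k := by
  have hp' : p.IsHomogeneous (k + 1) := homog_iff.mp hp
  rw [E12_apply]
  apply Submodule.sum_mem
  intro s _
  have hd : (pderiv s p).IsHomogeneous k := by simpa using pderiv_isHomog s hp'
  apply Submodule.sub_mem
  · exact Submodule.smul_mem _ _ (homog_iff.mpr hd)
  · rw [homog_iff]
    rcases Nat.eq_zero_or_pos k with h | h
    · subst h
      rw [pderiv_eq_zero_of_homog0 s hd, mul_zero]
      exact isHomogeneous_zero _ _ _
    · obtain ⟨t, rfl⟩ : ∃ t, k = t + 1 := ⟨k - 1, by omega⟩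
      have hdd : (pderiv s (pderiv s p)).IsHomogeneous t := by
        simpa using pderiv_isHomog s hd
      have := (isHomogeneous_X ℂ s).mul hdd
      simpa [Nat.add_comm] using this

lemma E12_zero (m : Fin n → ℂ) {p : MvPolynomial (Fin n) ℂ} (hp : p ∈ homog n 0) :
    E12 m p = 0 := by
  rw [homog_iff] at hp
  rw [E12_apply]
  apply Finset.sum_eq_zero
  intro s _
  rw [pderiv_eq_zero_of_homog0 s hp]
  simp

lemma comm_homog (m : Fin n → ℂ) (k : ℕ) (p : MvPolynomial (Fin n) ℂ)
    (hp : p ∈ homog n k) :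
    E12 m (E21 n p) = E21 n (E12 m p) + ((∑ s, m s) - 2 * (k : ℂ)) • p := by
  rw [comm12, euler (homog_iff.mp hp), smul_smul, add_sub_assoc, ← sub_smul]

lemma key (m : Fin n → ℂ) (l : ℕ) (hl : 1 ≤ l) (hsep : Separating m l)
    {v : MvPolynomial (Fin n) ℂ} (hv : v ∈ homog n (l - 1))
    (h0 : E12 m (E21 n v) = 0) : v = 0 := by
  set M : ℂ := ∑ s, m s with hM
  set c : ℕ → ℂ := fun j => ((j : ℂ) + 1) * (M - 2 * l + 2 + j) with hcdef
  have hc : ∀ j, j < l → c j ≠ 0 := by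
    intro j hj
    have h2' : M - 2 * (l : ℂ) + 2 + j ≠ 0 := by
      intro hh
      apply hsep (j + 1) (by omega) (by omega)
      push_cast
      linear_combination hh
    exact mul_ne_zero (Nat.cast_add_one_ne_zero j) h2'
  set w : ℕ → MvPolynomial (Fin n) ℂ := fun j => ((E12 m) ^ j) v with hwdef
  have hwsucc : ∀ j, w (j + 1) = E12 m (w j) := by
    intro j
    simp [hwdef, pow_succ', Module.End.mul_apply]
  have hwm : ∀ j, w j ∈ homog n (l - 1 - j) := by
    intro j
    induction j with
    | zero => simpa [hwdef] using hv
    | succ j ih =>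
      rw [hwsucc]
      rcases Nat.eq_zero_or_pos (l - 1 - j) with h | h
      · rw [h] at ih
        rw [E12_zero m ih]
        exact Submodule.zero_mem _
      · obtain ⟨t, ht⟩ : ∃ t, l - 1 - j = t + 1 := ⟨l - 1 - j - 1, by omega⟩
        rw [ht] at ih
        have h2 : l - 1 - (j + 1) = t := by omega
        rw [h2]
        exact E12_mem m ih
  have hrel : ∀ j, j < l → E21 n (w (j + 1)) = (-(c j)) • w j := by
    intro j
    induction j with
    | zero =>
      intro _
      have hcm := comm_homog m (l - 1) v hv
      rw [h0] at hcm
      have e1 : E21 n (E12 m v) = (-(M - 2 * ((l - 1 : ℕ) : ℂ))) • v := by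
        rw [neg_smul]
        exact eq_neg_of_add_eq_zero_left hcm.symm
      have e2 : (-(M - 2 * ((l - 1 : ℕ) : ℂ))) = -(c 0) := by
        rw [hcdef]
        push_cast [Nat.cast_sub hl]
        ring
      rw [hwsucc]
      show E21 n (E12 m (w 0)) = _
      have hw0 : w 0 = v := by simp [hwdef]
      rw [hw0, e1, e2]
    | succ j ih =>
      intro hj
      have hj' : j < l := by omega
      have e1 := congrArg (E12 m) (ih hj')
      have hcm := comm_homog m (l - 1 - (j + 1)) (w (j + 1)) (hwm (j + 1))
      rw [map_smul, hcm, ← hwsucc (j + 1), ← hwsucc j] at e1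
      -- e1 : E21 (w (j+1+1)) + (M - 2k) • w (j+1) = (-(c j)) • w (j+1)
      have e2 : E21 n (w (j + 1 + 1)) =
          ((-(c j)) - (M - 2 * ((l - 1 - (j + 1) : ℕ) : ℂ))) • w (j + 1) := by
        rw [sub_smul]
        exact eq_sub_of_add_eq e1
      rw [e2]
      congr 1
      have hcast : ((l - 1 - (j + 1) : ℕ) : ℂ) = (l : ℂ) - 2 - j := by
        have : l - 1 - (j + 1) = l - (j + 2) := by omega
        rw [this, Nat.cast_sub (by omega)]
        push_cast
        ring
      rw [hcast, hcdef]
      push_cast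
      ring
  have hdesc : ∀ d, d ≤ l - 1 → w (l - 1 - d) = 0 := by
    intro d
    induction d with
    | zero =>
      intro _
      have h1 := hrel (l - 1) (by omega)
      have h2 : w (l - 1 + 1) = 0 := by
        rw [hwsucc]
        apply E12_zero m
        have := hwm (l - 1)
        simpa using this
      rw [h2, map_zero] at h1
      rcases smul_eq_zero.mp h1.symm with h | h
      · exact absurd (neg_eq_zero.mp h) (hc (l - 1) (by omega))
      · simpa using h
    | succ d ih =>
      intro hd
      have hwd : w (l - 1 - d) = 0 := ih (by omega)
      have h1 := hrel (l - 1 - (d + 1)) (by omega)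
      have hs : l - 1 - (d + 1) + 1 = l - 1 - d := by omega
      rw [hs, hwd, map_zero] at h1
      rcases smul_eq_zero.mp h1.symm with h | h
      · exact absurd (neg_eq_zero.mp h) (hc (l - 1 - (d + 1)) (by omega))
      · exact h
  have hfin := hdesc (l - 1) le_rfl
  simpa [hwdef] using hfin

end

theorem statement_1 {n : ℕ} (hn : 1 ≤ n) (m : Fin n → ℂ) (l : ℕ) (hl : 1 ≤ l)
    (hsep : Separating m l) :
    ∃ hmap : ∀ v ∈ homog n (l - 1), (E12 m * E21 n) v ∈ homog n (l - 1),
      Function.Bijective ((E12 m * E21 n).restrict hmap) := by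
  have hmap : ∀ v ∈ homog n (l - 1), (E12 m * E21 n) v ∈ homog n (l - 1) := by
    intro v hv
    rw [Module.End.mul_apply]
    exact E12_mem m (E21_mem hv)
  refine ⟨hmap, ?_, ?_⟩
  · rw [injective_iff_map_eq_zero]
    intro a ha
    have hval : (E12 m * E21 n) (a : MvPolynomial (Fin n) ℂ) = 0 := by
      have := congrArg Subtype.val ha
      simpa [LinearMap.restrict_apply] using this
    rw [Module.End.mul_apply] at hval
    exact Subtype.ext (key m l hl hsep a.2 hval)
  · have hfd : FiniteDimensional ℂ (homog n (l - 1)) := by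
      have hle : homog n (l - 1) ≤ MvPolynomial.restrictTotalDegree (Fin n) ℂ (l - 1) := by
        intro p hp
        rw [MvPolynomial.mem_restrictTotalDegree]
        exact MvPolynomial.IsHomogeneous.totalDegree_le hp
      exact FiniteDimensional.of_injective (Submodule.inclusion hle)
        (Submodule.inclusion_injective hle)
    apply LinearMap.injective_iff_surjective.mp
    rw [injective_iff_map_eq_zero]
    intro a ha
    have hval : (E12 m * E21 n) (a : MvPolynomial (Fin n) ℂ) = 0 := by
      have := congrArg Subtype.val ha
      simpa [LinearMap.restrict_apply] using this
    rw [Module.End.mul_apply] at hval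
    exact Subtype.ext (key m l hl hsep a.2 hval)
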